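/- Let τ < T be real numbers. There is no function F : ℝ × ℝ × ℝ → ℝ such that for every differentiable function f : ℝ → ℝ and every t ∈ [τ, T], the derivative satisfies f'(t) = F(f(t), f(τ), t). -/

import Mathlib

open Set

/-- There is no function `F` such that the derivative of every differentiable
`f : ℝ → ℝ` on `[τ, T]` is determined by the current value `f t`, the initial
value `f τ`, and the time `t` via `f'(t) = F (f t, f τ, t)`. -/
theorem stmt_10 (τ T : ℝ) (hτT : τ < T) :
    ¬ ∃ F : ℝ × ℝ × ℝ → ℝ,
      ∀ f : ℝ → ℝ, Differentiable ℝ f →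
        ∀ t ∈ Set.Icc τ T, deriv f t = F (f t, f τ, t) := by
  rintro ⟨F, hF⟩
  have hne : T - τ ≠ 0 := sub_ne_zero.2 hτT.ne'
  set f : ℝ → ℝ := fun t => t - τ with hf
  set g : ℝ → ℝ := fun t => (t - τ)^2 / (T - τ) with hg
  have hdf : Differentiable ℝ f := by
    simpa [hf] using (differentiable_id.sub_const τ)
  have hdg : Differentiable ℝ g := by
    apply Differentiable.div_const
    exact (differentiable_id.sub_const τ).pow 2
  have hTmem : T ∈ Set.Icc τ T := ⟨hτT.le, le_rfl⟩
  have h1 : deriv f T = F (f T, f τ, T) := hF f hdf T hTmem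
  have h2 : deriv g T = F (g T, g τ, T) := hF g hdg T hTmem
  have hfval : f T = T - τ := by simp [hf]
  have hgval : g T = T - τ := by
    simp only [hg]
    field_simp
  have hfτ : f τ = 0 := by simp [hf]
  have hgτ : g τ = 0 := by simp [hg]
  have hdf1 : deriv f T = 1 := by
    simp [hf]
  have hdg2 : deriv g T = 2 := by
    have : deriv g T = deriv (fun t => (t - τ)^2) T / (T - τ) := by
      simp [hg, deriv_div_const]
    rw [this]
    have : deriv (fun t : ℝ => (t - τ)^2) T = 2 * (T - τ) := by
      have h := ((hasDerivAt_id T).sub_const τ).pow 2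
      simpa using h.deriv
    rw [this]
    field_simp
  rw [hdf1, hfval, hfτ] at h1
  rw [hdg2, hgval, hgτ] at h2
  rw [← h2] at h1
  norm_num at h1
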